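/- Let 𝓗 and 𝓚 be complex Hilbert spaces, α a bounded self-adjoint operator on 𝓗 and β : 𝓗 → 𝓚 a bounded operator. Then for either sign, ker(α − iβ*β) = ker(α) ∩ ker(β) and ker(α + iβ*β) = ker(α) ∩ ker(β). -/

import Mathlib

noncomputable section

open ContinuousLinearMap

private lemma stmt13_aux {𝓗 𝓚 : Type*}
    [NormedAddCommGroup 𝓗] [InnerProductSpace ℂ 𝓗] [CompleteSpace 𝓗]
    [NormedAddCommGroup 𝓚] [InnerProductSpace ℂ 𝓚] [CompleteSpace 𝓚]
    (α : 𝓗 →L[ℂ] 𝓗) (hα : IsSelfAdjoint α)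
    (β : 𝓗 →L[ℂ] 𝓚) (c : ℂ) (hc : starRingEnd ℂ c = -c) (hc0 : c ≠ 0)
    (x : 𝓗) (hx : α x = c • (ContinuousLinearMap.adjoint β (β x))) :
    β x = 0 ∧ α x = 0 := by
  have h1 : (inner ℂ x (α x) : ℂ) = c * (‖β x‖ ^ 2 : ℝ) := by
    rw [hx, inner_smul_right, ContinuousLinearMap.adjoint_inner_right,
      inner_self_eq_norm_sq_to_K]
    norm_cast
  have h2 : (starRingEnd ℂ) (inner ℂ x (α x) : ℂ) = inner ℂ x (α x) := by
    rw [inner_conj_symm]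
    conv_lhs => rw [← hα.adjoint_eq]
    rw [ContinuousLinearMap.adjoint_inner_left]
  rw [h1, map_mul, hc] at h2
  have hr : ((‖β x‖ ^ 2 : ℝ) : ℂ) = 0 := by
    have : (starRingEnd ℂ) ((‖β x‖ ^ 2 : ℝ) : ℂ) = ((‖β x‖ ^ 2 : ℝ) : ℂ) :=
      Complex.conj_ofReal _
    rw [this] at h2
    have h3 : (2 * c) * ((‖β x‖ ^ 2 : ℝ) : ℂ) = 0 := by linear_combination h1 - h2 - h1
    rcases mul_eq_zero.mp h3 with h | h
    · exact absurd h (by simpa using hc0)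
    · exact h
  have hβ : β x = 0 := by
    have : ‖β x‖ = 0 := by
      have := Complex.ofReal_eq_zero.mp hr
      nlinarith [norm_nonneg (β x)]
    simpa using this
  refine ⟨hβ, ?_⟩
  rw [hx, hβ]
  simp

/-- For a bounded self-adjoint `α` on `𝓗` and a bounded `β : 𝓗 → 𝓚`,
`ker(α − iβ*β) = ker α ∩ ker β` and `ker(α + iβ*β) = ker α ∩ ker β`. -/
theorem stmt13 {𝓗 𝓚 : Type*}
    [NormedAddCommGroup 𝓗] [InnerProductSpace ℂ 𝓗] [CompleteSpace 𝓗]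
    [NormedAddCommGroup 𝓚] [InnerProductSpace ℂ 𝓚] [CompleteSpace 𝓚]
    (α : 𝓗 →L[ℂ] 𝓗) (hα : IsSelfAdjoint α)
    (β : 𝓗 →L[ℂ] 𝓚) :
    LinearMap.ker ((α - Complex.I • (ContinuousLinearMap.adjoint β ∘L β) : 𝓗 →L[ℂ] 𝓗) : 𝓗 →ₗ[ℂ] 𝓗) =
        LinearMap.ker (α : 𝓗 →ₗ[ℂ] 𝓗) ⊓ LinearMap.ker (β : 𝓗 →ₗ[ℂ] 𝓚) ∧
    LinearMap.ker ((α + Complex.I • (ContinuousLinearMap.adjoint β ∘L β) : 𝓗 →L[ℂ] 𝓗) : 𝓗 →ₗ[ℂ] 𝓗) =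
        LinearMap.ker (α : 𝓗 →ₗ[ℂ] 𝓗) ⊓ LinearMap.ker (β : 𝓗 →ₗ[ℂ] 𝓚) := by
  constructor
  · ext x
    simp only [LinearMap.mem_ker, Submodule.mem_inf, ContinuousLinearMap.coe_coe, ContinuousLinearMap.sub_apply,
      ContinuousLinearMap.smul_apply, ContinuousLinearMap.comp_apply, sub_eq_zero]
    constructor
    · intro h
      have := stmt13_aux α hα β Complex.I (by simp) Complex.I_ne_zero x h
      exact ⟨this.2, this.1⟩
    · rintro ⟨h1, h2⟩
      rw [h1, h2]
      simp
  · ext x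
    simp only [LinearMap.mem_ker, Submodule.mem_inf, ContinuousLinearMap.coe_coe, ContinuousLinearMap.add_apply,
      ContinuousLinearMap.smul_apply, ContinuousLinearMap.comp_apply, add_eq_zero_iff_eq_neg]
    constructor
    · intro h
      have hx : α x = (-Complex.I) • (ContinuousLinearMap.adjoint β (β x)) := by
        rw [h]; simp
      have := stmt13_aux α hα β (-Complex.I) (by simp) (by simp [Complex.I_ne_zero]) x hx
      exact ⟨this.2, this.1⟩
    · rintro ⟨h1, h2⟩
      rw [h1, h2]
      simp
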